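/- For the thinned Gamma process step X₁ = B·X₀ + ζ with independent X₀ ~ Gamma(α,β), B ~ Beta(αρ, α(1-ρ)), ζ ~ Gamma(α(1-ρ), β), the correlation of X₀ and X₁ equals ρ. -/

import Mathlib

open MeasureTheory ProbabilityTheory

/-- The Beta(a,b) probability density on (0,1). -/
noncomputable def betaPDFReal (a b x : ℝ) : ℝ :=
  if 0 < x ∧ x < 1 then
    Real.Gamma (a + b) / (Real.Gamma a * Real.Gamma b) * x ^ (a - 1) * (1 - x) ^ (b - 1)
  else 0

/-- The Beta(a,b) distribution on ℝ. -/
noncomputable def betaMeasure (a b : ℝ) : Measure ℝ :=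
  volume.withDensity fun x => ENNReal.ofReal (_root_.betaPDFReal a b x)

open Set Real
open scoped ENNReal NNReal

lemma withDensity_ofReal_integral {f : ℝ → ℝ} (hf : Measurable f) (h0 : ∀ x, 0 ≤ f x)
    (g : ℝ → ℝ) :
    ∫ x, g x ∂(volume.withDensity fun x => ENNReal.ofReal (f x)) = ∫ x, f x * g x := by
  have h : (fun x => ENNReal.ofReal (f x))
      = fun x => (((fun x => (f x).toNNReal) x : ℝ≥0) : ℝ≥0∞) := rfl
  rw [h, integral_withDensity_eq_integral_smul hf.real_toNNReal]
  congr 1; ext x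
  simp [NNReal.smul_def, Real.coe_toNNReal _ (h0 x)]

lemma withDensity_ofReal_integrable {f : ℝ → ℝ} (hf : Measurable f) (h0 : ∀ x, 0 ≤ f x)
    {g : ℝ → ℝ} (hg : Integrable (fun x => f x * g x)) :
    Integrable g (volume.withDensity fun x => ENNReal.ofReal (f x)) := by
  have h : (fun x => ENNReal.ofReal (f x))
      = fun x => (((fun x => (f x).toNNReal) x : ℝ≥0) : ℝ≥0∞) := rfl
  rw [h, integrable_withDensity_iff_integrable_smul hf.real_toNNReal]
  apply hg.congr
  filter_upwards with x
  simp [NNReal.smul_def, Real.coe_toNNReal _ (h0 x)]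

lemma complex_eq_ofReal_on {a b x : ℝ} (hx : x ∈ Ioc (0:ℝ) 1) :
    (x:ℂ) ^ ((a:ℂ) - 1) * (1 - (x:ℂ)) ^ ((b:ℂ) - 1)
      = ((x ^ (a - 1) * (1 - x) ^ (b - 1) : ℝ) : ℂ) := by
  have h1 : ((a:ℂ) - 1) = ((a - 1 : ℝ) : ℂ) := by push_cast; ring
  have h2 : ((b:ℂ) - 1) = ((b - 1 : ℝ) : ℂ) := by push_cast; ring
  have h3 : (1 - (x:ℂ)) = ((1 - x : ℝ) : ℂ) := by push_cast; ring
  rw [h1, h2, h3, ← Complex.ofReal_cpow hx.1.le, ← Complex.ofReal_cpow (by linarith [hx.2]),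
    ← Complex.ofReal_mul]

lemma real_beta_integrableOn {a b : ℝ} (ha : 0 < a) (hb : 0 < b) :
    IntegrableOn (fun x : ℝ => x ^ (a - 1) * (1 - x) ^ (b - 1)) (Ioc 0 1) := by
  have hconv := Complex.betaIntegral_convergent (u := a) (v := b) (by simpa) (by simpa)
  rw [intervalIntegrable_iff_integrableOn_Ioc_of_le zero_le_one] at hconv
  refine hconv.re.congr ?_
  filter_upwards [ae_restrict_mem measurableSet_Ioc] with x hx
  simp [complex_eq_ofReal_on hx]

lemma real_beta_integral {a b : ℝ} (ha : 0 < a) (hb : 0 < b) :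
    ∫ x in Ioc (0:ℝ) 1, x ^ (a - 1) * (1 - x) ^ (b - 1) =
      Real.Gamma a * Real.Gamma b / Real.Gamma (a + b) := by
  have h := Complex.Gamma_mul_Gamma_eq_betaIntegral (s := a) (t := b) (by simpa) (by simpa)
  have hbeta : Complex.betaIntegral a b =
      ((∫ x in Ioc (0:ℝ) 1, x ^ (a - 1) * (1 - x) ^ (b - 1)) : ℝ) := by
    rw [Complex.betaIntegral, intervalIntegral.integral_of_le zero_le_one,
      setIntegral_congr_fun measurableSet_Ioc (fun x hx => complex_eq_ofReal_on hx)]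
    exact integral_ofReal
  rw [hbeta, ← Complex.ofReal_add a b, Complex.Gamma_ofReal, Complex.Gamma_ofReal,
    Complex.Gamma_ofReal, ← Complex.ofReal_mul, ← Complex.ofReal_mul] at h
  have h' := Complex.ofReal_inj.mp h
  have hG : Real.Gamma (a + b) ≠ 0 := (Real.Gamma_pos_of_pos (by linarith)).ne'
  field_simp [hG]
  linarith [h']

lemma measurable_betaPDFReal (a b : ℝ) : Measurable (_root_.betaPDFReal a b) := by
  unfold _root_.betaPDFReal
  refine Measurable.ite ?_ ?_ measurable_const
  · exact (measurableSet_Ioo : MeasurableSet (Ioo (0:ℝ) 1))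
  · fun_prop

lemma betaPDFReal_nonneg {a b : ℝ} (ha : 0 < a) (hb : 0 < b) (x : ℝ) :
    0 ≤ _root_.betaPDFReal a b x := by
  unfold _root_.betaPDFReal
  split_ifs with h
  · have h1 := h.1; have h2 := h.2
    have : (0:ℝ) ≤ 1 - x := by linarith
    positivity
  · exact le_refl 0

lemma betaPDF_mul_pow_eq {a b : ℝ} (n : ℕ) {x : ℝ} (hx : x ∈ Ioo (0:ℝ) 1) :
    _root_.betaPDFReal a b x * x ^ n =
      Real.Gamma (a + b) / (Real.Gamma a * Real.Gamma b) *
        (x ^ (a + n - 1) * (1 - x) ^ (b - 1)) := by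
  rw [_root_.betaPDFReal, if_pos ⟨hx.1, hx.2⟩]
  have key : x ^ (a - 1) * (x : ℝ) ^ n = x ^ (a + n - 1) := by
    rw [← Real.rpow_natCast x n, ← Real.rpow_add hx.1]
    ring_nf
  rw [← key]; ring

lemma betaPDF_mul_pow_zero {a b : ℝ} (n : ℕ) {x : ℝ} (hx : x ∉ Ioc (0:ℝ) 1) :
    _root_.betaPDFReal a b x * x ^ n = 0 := by
  rw [_root_.betaPDFReal, if_neg, zero_mul]
  rintro ⟨h1, h2⟩
  exact hx ⟨h1, h2.le⟩

lemma beta_pow_integral {a b : ℝ} (ha : 0 < a) (hb : 0 < b) (n : ℕ) :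
    ∫ x, _root_.betaPDFReal a b x * x ^ n =
      Real.Gamma (a + b) * Real.Gamma (a + n) / (Real.Gamma a * Real.Gamma (a + n + b)) := by
  rw [← setIntegral_eq_integral_of_forall_compl_eq_zero
      (fun x hx => betaPDF_mul_pow_zero (a := a) (b := b) n hx),
    integral_Ioc_eq_integral_Ioo,
    setIntegral_congr_fun measurableSet_Ioo (fun x hx => betaPDF_mul_pow_eq n hx),
    integral_const_mul, ← integral_Ioc_eq_integral_Ioo,
    real_beta_integral (by positivity) hb]
  have h1 : Real.Gamma a ≠ 0 := (Real.Gamma_pos_of_pos ha).ne'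
  have h2 : Real.Gamma b ≠ 0 := (Real.Gamma_pos_of_pos hb).ne'
  have h3 : Real.Gamma (a + n + b) ≠ 0 := (Real.Gamma_pos_of_pos (by positivity)).ne'
  field_simp

lemma beta_pow_integrable {a b : ℝ} (ha : 0 < a) (hb : 0 < b) (n : ℕ) :
    Integrable (fun x => _root_.betaPDFReal a b x * x ^ n) := by
  have heq : (fun x => _root_.betaPDFReal a b x * x ^ n)
      = (Ioc (0:ℝ) 1).indicator (fun x => _root_.betaPDFReal a b x * x ^ n) := by
    funext x
    by_cases hx : x ∈ Ioc (0:ℝ) 1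
    · rw [indicator_of_mem hx]
    · rw [indicator_of_notMem hx, betaPDF_mul_pow_zero n hx]
  rw [heq, integrable_indicator_iff measurableSet_Ioc,
    integrableOn_Ioc_iff_integrableOn_Ioo]
  refine (((real_beta_integrableOn (a := a + n) (by positivity) hb).mono_set
      Ioo_subset_Ioc_self).const_mul
      (Real.Gamma (a + b) / (Real.Gamma a * Real.Gamma b))).congr ?_
  filter_upwards [ae_restrict_mem measurableSet_Ioo] with x hx
  exact (betaPDF_mul_pow_eq n hx).symm

lemma gammaPDF_mul_pow_eq {a r : ℝ} (n : ℕ) {x : ℝ} (hx : x ∈ Ioi (0:ℝ)) :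
    ProbabilityTheory.gammaPDFReal a r x * x ^ n =
      r ^ a / Real.Gamma a * (x ^ (a + n - 1) * Real.exp (-(r * x))) := by
  rw [ProbabilityTheory.gammaPDFReal, if_pos (le_of_lt hx)]
  have key : x ^ (a - 1) * (x : ℝ) ^ n = x ^ (a + n - 1) := by
    rw [← Real.rpow_natCast x n, ← Real.rpow_add hx]
    ring_nf
  rw [← key]; ring

lemma gammaPDF_mul_pow_zero {a r : ℝ} (n : ℕ) {x : ℝ} (hx : x ∉ Ici (0:ℝ)) :
    ProbabilityTheory.gammaPDFReal a r x * x ^ n = 0 := by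
  rw [ProbabilityTheory.gammaPDFReal, if_neg (show ¬ (0:ℝ) ≤ x from hx), zero_mul]

lemma gamma_pow_integral {a r : ℝ} (ha : 0 < a) (hr : 0 < r) (n : ℕ) :
    ∫ x, ProbabilityTheory.gammaPDFReal a r x * x ^ n =
      Real.Gamma (a + n) / Real.Gamma a / r ^ n := by
  rw [← setIntegral_eq_integral_of_forall_compl_eq_zero
      (fun x hx => gammaPDF_mul_pow_zero (a := a) (r := r) n hx),
    integral_Ici_eq_integral_Ioi,
    setIntegral_congr_fun measurableSet_Ioi (fun x hx => gammaPDF_mul_pow_eq n hx),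
    integral_const_mul]
  have h := Real.integral_rpow_mul_exp_neg_mul_Ioi (a := a + n) (by positivity) hr
  rw [show a + (n:ℝ) - 1 = a + n - 1 from rfl] at h
  rw [h]
  have hG : Real.Gamma a ≠ 0 := (Real.Gamma_pos_of_pos ha).ne'
  have hra : (0:ℝ) < r ^ a := Real.rpow_pos_of_pos hr a
  have hadd : r ^ (a + (n:ℝ)) = r ^ a * r ^ (n:ℕ) := by
    rw [Real.rpow_add hr, Real.rpow_natCast]
  rw [one_div, Real.inv_rpow hr.le]
  rw [show (r ^ (a + (n:ℝ)))⁻¹ = (r ^ a)⁻¹ * (r ^ (n:ℕ) : ℝ)⁻¹ by rw [hadd, mul_inv]]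
  have hrn : (0:ℝ) < r ^ (n:ℕ) := pow_pos hr n
  field_simp

lemma gamma_pow_integrable {a r : ℝ} (ha : 0 < a) (hr : 0 < r) (n : ℕ) :
    Integrable (fun x => ProbabilityTheory.gammaPDFReal a r x * x ^ n) := by
  have heq : (fun x => ProbabilityTheory.gammaPDFReal a r x * x ^ n)
      = (Ici (0:ℝ)).indicator (fun x => ProbabilityTheory.gammaPDFReal a r x * x ^ n) := by
    funext x
    by_cases hx : x ∈ Ici (0:ℝ)
    · rw [indicator_of_mem hx]
    · rw [indicator_of_notMem hx, gammaPDF_mul_pow_zero n hx]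
  rw [heq, integrable_indicator_iff measurableSet_Ici, integrableOn_Ici_iff_integrableOn_Ioi]
  have base : IntegrableOn (fun x : ℝ => x ^ (a + n - 1) * Real.exp (-(r * x))) (Ioi 0) := by
    refine (integrableOn_rpow_mul_exp_neg_mul_rpow (p := 1) (s := a + n - 1)
        (by linarith [Nat.cast_nonneg (α := ℝ) n]) zero_lt_one hr).congr ?_
    filter_upwards [ae_restrict_mem measurableSet_Ioi] with x hx
    rw [Real.rpow_one]; ring_nf
  refine ((base.const_mul (r ^ a / Real.Gamma a)).congr ?_)
  filter_upwards [ae_restrict_mem measurableSet_Ioi] with x hx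
  exact (gammaPDF_mul_pow_eq n hx).symm

lemma gammaMeasure_eq (a r : ℝ) :
    gammaMeasure a r = volume.withDensity fun x => ENNReal.ofReal (gammaPDFReal a r x) := rfl

lemma integral_gammaMeasure_pow {a r : ℝ} (ha : 0 < a) (hr : 0 < r) (n : ℕ) :
    ∫ x, x ^ n ∂gammaMeasure a r = Real.Gamma (a + n) / Real.Gamma a / r ^ n := by
  rw [gammaMeasure_eq,
    withDensity_ofReal_integral (measurable_gammaPDFReal a r) (gammaPDFReal_nonneg ha hr),
    gamma_pow_integral ha hr n]

lemma integrable_gammaMeasure_pow {a r : ℝ} (ha : 0 < a) (hr : 0 < r) (n : ℕ) :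
    Integrable (fun x => x ^ n) (gammaMeasure a r) := by
  rw [gammaMeasure_eq]
  exact withDensity_ofReal_integrable (measurable_gammaPDFReal a r)
    (gammaPDFReal_nonneg ha hr) (gamma_pow_integrable ha hr n)

lemma integrable_gammaMeasure_id {a r : ℝ} (ha : 0 < a) (hr : 0 < r) :
    Integrable (fun x => x) (gammaMeasure a r) := by
  have := integrable_gammaMeasure_pow ha hr 1
  simpa using this

lemma integral_gammaMeasure_id {a r : ℝ} (ha : 0 < a) (hr : 0 < r) :
    ∫ x, x ∂gammaMeasure a r = a / r := by
  have h := integral_gammaMeasure_pow ha hr 1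
  have hG : Real.Gamma a ≠ 0 := (Real.Gamma_pos_of_pos ha).ne'
  rw [show ((1:ℕ):ℝ) = (1:ℝ) by norm_num, Real.Gamma_add_one ha.ne'] at h
  simp only [pow_one] at h
  rw [h]
  field_simp

lemma integral_gammaMeasure_sq {a r : ℝ} (ha : 0 < a) (hr : 0 < r) :
    ∫ x, x ^ 2 ∂gammaMeasure a r = a * (a + 1) / r ^ 2 := by
  have h := integral_gammaMeasure_pow ha hr 2
  have hG : Real.Gamma a ≠ 0 := (Real.Gamma_pos_of_pos ha).ne'
  rw [show a + ((2:ℕ):ℝ) = (a + 1) + 1 by push_cast; ring,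
    Real.Gamma_add_one (by positivity), Real.Gamma_add_one ha.ne'] at h
  rw [h]
  have : (0:ℝ) < r ^ 2 := by positivity
  field_simp

lemma integral_betaMeasure_pow {a b : ℝ} (ha : 0 < a) (hb : 0 < b) (n : ℕ) :
    ∫ x, x ^ n ∂_root_.betaMeasure a b =
      Real.Gamma (a + b) * Real.Gamma (a + n) / (Real.Gamma a * Real.Gamma (a + n + b)) := by
  rw [_root_.betaMeasure,
    withDensity_ofReal_integral (_root_.measurable_betaPDFReal a b) (betaPDFReal_nonneg ha hb),
    beta_pow_integral ha hb n]

lemma integrable_betaMeasure_pow {a b : ℝ} (ha : 0 < a) (hb : 0 < b) (n : ℕ) :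
    Integrable (fun x => x ^ n) (_root_.betaMeasure a b) := by
  rw [_root_.betaMeasure]
  exact withDensity_ofReal_integrable (_root_.measurable_betaPDFReal a b)
    (betaPDFReal_nonneg ha hb) (beta_pow_integrable ha hb n)

lemma integrable_betaMeasure_id {a b : ℝ} (ha : 0 < a) (hb : 0 < b) :
    Integrable (fun x => x) (_root_.betaMeasure a b) := by
  have := integrable_betaMeasure_pow ha hb 1
  simpa using this

lemma integral_betaMeasure_id {a b : ℝ} (ha : 0 < a) (hb : 0 < b) :
    ∫ x, x ∂_root_.betaMeasure a b = a / (a + b) := by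
  have h := integral_betaMeasure_pow ha hb 1
  have hGa : Real.Gamma a ≠ 0 := (Real.Gamma_pos_of_pos ha).ne'
  have hGab : Real.Gamma (a + b) ≠ 0 := (Real.Gamma_pos_of_pos (by positivity)).ne'
  rw [show ((1:ℕ):ℝ) = (1:ℝ) by norm_num, Real.Gamma_add_one ha.ne',
    show a + 1 + b = (a + b) + 1 by ring, Real.Gamma_add_one (by positivity)] at h
  rw [show (∫ x, x ∂_root_.betaMeasure a b) = ∫ x, x ^ 1 ∂_root_.betaMeasure a b by simp, h]
  have : a + b ≠ 0 := by positivity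
  field_simp

lemma integral_betaMeasure_sq {a b : ℝ} (ha : 0 < a) (hb : 0 < b) :
    ∫ x, x ^ 2 ∂_root_.betaMeasure a b = a * (a + 1) / ((a + b) * (a + b + 1)) := by
  have h := integral_betaMeasure_pow ha hb 2
  have hGa : Real.Gamma a ≠ 0 := (Real.Gamma_pos_of_pos ha).ne'
  have hGab : Real.Gamma (a + b) ≠ 0 := (Real.Gamma_pos_of_pos (by positivity)).ne'
  rw [show a + ((2:ℕ):ℝ) + b = (a + b + 1) + 1 by push_cast; ring,
    Real.Gamma_add_one (by positivity), show a + b + 1 = (a + b) + 1 from rfl,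
    Real.Gamma_add_one (by positivity),
    show a + ((2:ℕ):ℝ) = (a + 1) + 1 by push_cast; ring,
    Real.Gamma_add_one (by positivity), Real.Gamma_add_one ha.ne'] at h
  rw [h]
  have h1 : a + b ≠ 0 := by positivity
  have h2 : a + b + 1 ≠ 0 := by positivity
  field_simp

theorem thinned_gamma_correlation
    {Ω : Type*} [MeasurableSpace Ω] (P : Measure Ω) [IsProbabilityMeasure P]
    (α β ρ : ℝ) (hα : 0 < α) (hβ : 0 < β) (hρ₀ : 0 < ρ) (hρ₁ : ρ < 1)
    (X₀ B ζ : Ω → ℝ) (hX₀ : Measurable X₀) (hB : Measurable B) (hζ : Measurable ζ)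
    (hindep : iIndepFun ![X₀, B, ζ] P)
    (hX₀law : Measure.map X₀ P = gammaMeasure α β)
    (hBlaw : Measure.map B P = _root_.betaMeasure (α * ρ) (α * (1 - ρ)))
    (hζlaw : Measure.map ζ P = gammaMeasure (α * (1 - ρ)) β)
    (X₁ : Ω → ℝ) (hX₁ : X₁ = fun w => B w * X₀ w + ζ w) :
    (∫ w, X₀ w * X₁ w ∂P - (∫ w, X₀ w ∂P) * (∫ w, X₁ w ∂P)) /
        (Real.sqrt (variance X₀ P) * Real.sqrt (variance X₁ P)) = ρ := by
  subst hX₁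
  have hρ' : 0 < 1 - ρ := by linarith
  have ha' : 0 < α * ρ := by positivity
  have hb' : 0 < α * (1 - ρ) := by positivity
  -- measurability of the vector
  have hm : ∀ i, Measurable (![X₀, B, ζ] i) := by
    intro i; fin_cases i <;> simpa
  -- pairwise independence
  have hBX : IndepFun B X₀ P := by
    have := hindep.indepFun (show (1 : Fin 3) ≠ 0 by decide)
    simpa using this
  have hX₀ζ : IndepFun X₀ ζ P := by
    have := hindep.indepFun (show (0 : Fin 3) ≠ 2 by decide)
    simpa using this
  have hBX₀ζ : IndepFun (fun w => B w * X₀ w) ζ P := by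
    have := hindep.indepFun_mul_left hm 1 0 2 (by decide) (by decide)
    simpa [Pi.mul_def] using this
  -- moments of X₀
  have hEX₀ : ∫ w, X₀ w ∂P = α / β := by
    have h : ∫ x, x ∂(Measure.map X₀ P) = ∫ w, X₀ w ∂P :=
      integral_map hX₀.aemeasurable aestronglyMeasurable_id
    rw [← h, hX₀law, integral_gammaMeasure_id hα hβ]
  have hEX₀sq : ∫ w, X₀ w ^ 2 ∂P = α * (α + 1) / β ^ 2 := by
    have h : ∫ x, x ^ 2 ∂(Measure.map X₀ P) = ∫ w, X₀ w ^ 2 ∂P :=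
      integral_map hX₀.aemeasurable (measurable_id.pow_const 2).aestronglyMeasurable
    rw [← h, hX₀law, integral_gammaMeasure_sq hα hβ]
  have hEζ : ∫ w, ζ w ∂P = α * (1 - ρ) / β := by
    have h : ∫ x, x ∂(Measure.map ζ P) = ∫ w, ζ w ∂P :=
      integral_map hζ.aemeasurable aestronglyMeasurable_id
    rw [← h, hζlaw, integral_gammaMeasure_id hb' hβ]
  have hEζsq : ∫ w, ζ w ^ 2 ∂P = α * (1 - ρ) * (α * (1 - ρ) + 1) / β ^ 2 := by
    have h : ∫ x, x ^ 2 ∂(Measure.map ζ P) = ∫ w, ζ w ^ 2 ∂P :=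
      integral_map hζ.aemeasurable (measurable_id.pow_const 2).aestronglyMeasurable
    rw [← h, hζlaw, integral_gammaMeasure_sq hb' hβ]
  have hEB : ∫ w, B w ∂P = ρ := by
    have h : ∫ x, x ∂(Measure.map B P) = ∫ w, B w ∂P :=
      integral_map hB.aemeasurable aestronglyMeasurable_id
    rw [← h, hBlaw, integral_betaMeasure_id ha' hb',
      show α * ρ + α * (1 - ρ) = α by ring]
    field_simp
  have hEBsq : ∫ w, B w ^ 2 ∂P = ρ * (α * ρ + 1) / (α + 1) := by
    have h : ∫ x, x ^ 2 ∂(Measure.map B P) = ∫ w, B w ^ 2 ∂P :=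
      integral_map hB.aemeasurable (measurable_id.pow_const 2).aestronglyMeasurable
    rw [← h, hBlaw, integral_betaMeasure_sq ha' hb',
      show α * ρ + α * (1 - ρ) = α by ring]
    have h1 : α + 1 ≠ 0 := by positivity
    field_simp
  -- integrability
  have iX₀ : Integrable X₀ P := by
    have h : Integrable (fun x => x) (Measure.map X₀ P) := by
      rw [hX₀law]; exact integrable_gammaMeasure_id hα hβ
    exact (integrable_map_measure aestronglyMeasurable_id hX₀.aemeasurable).mp h
  have iX₀sq : Integrable (fun w => X₀ w ^ 2) P := by
    have h : Integrable (fun x => x ^ 2) (Measure.map X₀ P) := by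
      rw [hX₀law]; exact integrable_gammaMeasure_pow hα hβ 2
    exact (integrable_map_measure (measurable_id.pow_const 2).aestronglyMeasurable
      hX₀.aemeasurable).mp h
  have iζ : Integrable ζ P := by
    have h : Integrable (fun x => x) (Measure.map ζ P) := by
      rw [hζlaw]; exact integrable_gammaMeasure_id hb' hβ
    exact (integrable_map_measure aestronglyMeasurable_id hζ.aemeasurable).mp h
  have iζsq : Integrable (fun w => ζ w ^ 2) P := by
    have h : Integrable (fun x => x ^ 2) (Measure.map ζ P) := by
      rw [hζlaw]; exact integrable_gammaMeasure_pow hb' hβ 2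
    exact (integrable_map_measure (measurable_id.pow_const 2).aestronglyMeasurable
      hζ.aemeasurable).mp h
  have iB : Integrable B P := by
    have h : Integrable (fun x => x) (Measure.map B P) := by
      rw [hBlaw]; exact integrable_betaMeasure_id ha' hb'
    exact (integrable_map_measure aestronglyMeasurable_id hB.aemeasurable).mp h
  have iBsq : Integrable (fun w => B w ^ 2) P := by
    have h : Integrable (fun x => x ^ 2) (Measure.map B P) := by
      rw [hBlaw]; exact integrable_betaMeasure_pow ha' hb' 2
    exact (integrable_map_measure (measurable_id.pow_const 2).aestronglyMeasurable
      hB.aemeasurable).mp h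
  -- products
  have hBXsq : IndepFun B (fun w => X₀ w ^ 2) P :=
    hBX.comp measurable_id (measurable_id.pow_const 2)
  have hBsqXsq : IndepFun (fun w => B w ^ 2) (fun w => X₀ w ^ 2) P :=
    hBX.comp (measurable_id.pow_const 2) (measurable_id.pow_const 2)
  have iBX₀ : Integrable (fun w => B w * X₀ w) P := hBX.integrable_mul iB iX₀
  have iBX₀sq : Integrable (fun w => B w * X₀ w ^ 2) P := hBXsq.integrable_mul iB iX₀sq
  have iX₀ζ : Integrable (fun w => X₀ w * ζ w) P := hX₀ζ.integrable_mul iX₀ iζ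
  have iBX₀_sq : Integrable (fun w => (B w * X₀ w) ^ 2) P := by
    have h := hBsqXsq.integrable_mul iBsq iX₀sq
    refine h.congr (Filter.Eventually.of_forall fun w => ?_)
    simp [Pi.mul_apply, mul_pow]
  have iBX₀ζ : Integrable (fun w => B w * X₀ w * ζ w) P := hBX₀ζ.integrable_mul iBX₀ iζ
  -- product expectations
  have hEBX₀ : ∫ w, B w * X₀ w ∂P = ρ * (α / β) := by
    have := hBX.integral_mul_eq_mul_integral iB.aestronglyMeasurable iX₀.aestronglyMeasurable
    rw [show (∫ w, B w * X₀ w ∂P) = ∫ w, (B * X₀) w ∂P from rfl, this, hEB, hEX₀]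
  have hEBX₀sq : ∫ w, B w * X₀ w ^ 2 ∂P = ρ * (α * (α + 1) / β ^ 2) := by
    have := hBXsq.integral_mul_eq_mul_integral iB.aestronglyMeasurable iX₀sq.aestronglyMeasurable
    rw [show (∫ w, B w * X₀ w ^ 2 ∂P) = ∫ w, (B * fun w => X₀ w ^ 2) w ∂P from rfl, this,
      hEB, hEX₀sq]
  have hEX₀ζ : ∫ w, X₀ w * ζ w ∂P = (α / β) * (α * (1 - ρ) / β) := by
    have := hX₀ζ.integral_mul_eq_mul_integral iX₀.aestronglyMeasurable iζ.aestronglyMeasurable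
    rw [show (∫ w, X₀ w * ζ w ∂P) = ∫ w, (X₀ * ζ) w ∂P from rfl, this, hEX₀, hEζ]
  have hEBX₀_sq : ∫ w, (B w * X₀ w) ^ 2 ∂P
      = (ρ * (α * ρ + 1) / (α + 1)) * (α * (α + 1) / β ^ 2) := by
    have h2 := hBsqXsq.integral_mul_eq_mul_integral iBsq.aestronglyMeasurable iX₀sq.aestronglyMeasurable
    have h3 : ∫ w, (B w * X₀ w) ^ 2 ∂P = ∫ w, B w ^ 2 * X₀ w ^ 2 ∂P := by
      congr 1; funext w; ring
    rw [h3, show (∫ w, B w ^ 2 * X₀ w ^ 2 ∂P)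
      = ∫ w, ((fun w => B w ^ 2) * fun w => X₀ w ^ 2) w ∂P from rfl, h2, hEBsq, hEX₀sq]
  have hEBX₀ζ : ∫ w, B w * X₀ w * ζ w ∂P = ρ * (α / β) * (α * (1 - ρ) / β) := by
    have := hBX₀ζ.integral_mul_eq_mul_integral iBX₀.aestronglyMeasurable iζ.aestronglyMeasurable
    rw [show (∫ w, B w * X₀ w * ζ w ∂P)
      = ∫ w, ((fun w => B w * X₀ w) * ζ) w ∂P from rfl, this, hEBX₀, hEζ]
  -- expectation of X₁
  have hEX₁ : ∫ w, (B w * X₀ w + ζ w) ∂P = ρ * (α / β) + α * (1 - ρ) / β := by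
    rw [integral_add iBX₀ iζ, hEBX₀, hEζ]
  -- E[X₀ X₁]
  have hEX₀X₁ : ∫ w, X₀ w * (B w * X₀ w + ζ w) ∂P
      = ρ * (α * (α + 1) / β ^ 2) + (α / β) * (α * (1 - ρ) / β) := by
    have h : (fun w => X₀ w * (B w * X₀ w + ζ w))
        = fun w => B w * X₀ w ^ 2 + X₀ w * ζ w := by funext w; ring
    rw [h, integral_add iBX₀sq iX₀ζ, hEBX₀sq, hEX₀ζ]
  -- E[X₁²]
  have hEX₁sq : ∫ w, (B w * X₀ w + ζ w) ^ 2 ∂P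
      = (ρ * (α * ρ + 1) / (α + 1)) * (α * (α + 1) / β ^ 2)
        + 2 * (ρ * (α / β) * (α * (1 - ρ) / β))
        + α * (1 - ρ) * (α * (1 - ρ) + 1) / β ^ 2 := by
    have h : (fun w => (B w * X₀ w + ζ w) ^ 2)
        = fun w => ((B w * X₀ w) ^ 2 + 2 * (B w * X₀ w * ζ w)) + ζ w ^ 2 := by
      funext w; ring
    have i12 : Integrable (fun w => (B w * X₀ w) ^ 2 + 2 * (B w * X₀ w * ζ w)) P :=
      iBX₀_sq.add (iBX₀ζ.const_mul 2)
    rw [h, integral_add i12 iζsq,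
      integral_add iBX₀_sq (iBX₀ζ.const_mul 2), MeasureTheory.integral_const_mul,
      hEBX₀_sq, hEBX₀ζ, hEζsq]
  -- variances
  have mX₀ : MemLp X₀ 2 P :=
    (memLp_two_iff_integrable_sq hX₀.aestronglyMeasurable).mpr iX₀sq
  have mX₁ : MemLp (fun w => B w * X₀ w + ζ w) 2 P := by
    refine (memLp_two_iff_integrable_sq
      ((hB.mul hX₀).add hζ).aestronglyMeasurable).mpr ?_
    have i123 : Integrable (fun w => ((B w * X₀ w) ^ 2 + 2 * (B w * X₀ w * ζ w)) + ζ w ^ 2) P :=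
      (iBX₀_sq.add (iBX₀ζ.const_mul 2)).add iζsq
    refine i123.congr (Filter.Eventually.of_forall fun w => ?_)
    simp only [Pi.pow_apply, Pi.add_apply, Pi.mul_apply]
    ring
  have hvarX₀ : variance X₀ P = α / β ^ 2 := by
    rw [variance_eq_sub mX₀]
    simp only [Pi.pow_apply]
    rw [hEX₀sq, hEX₀]
    field_simp
    ring
  have hvarX₁ : variance (fun w => B w * X₀ w + ζ w) P = α / β ^ 2 := by
    rw [variance_eq_sub mX₁]
    simp only [Pi.pow_apply]
    rw [hEX₁sq, hEX₁]
    have h1 : α + 1 ≠ 0 := by positivity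
    field_simp
    ring
  rw [hvarX₀, hvarX₁, Real.mul_self_sqrt (by positivity), hEX₀X₁, hEX₀, hEX₁]
  rw [div_eq_iff (by positivity : (α : ℝ) / β ^ 2 ≠ 0)]
  field_simp
  ring
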